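/- (Lemma 3, bounds via the tail summaries H_i) In the setup below, for every S ⊆ {1,…,n} with |S| ≤ k, the following hold: u(S) ≥ (1−ε)^{k−1} · (1 − Δ/ε) · max{ ε·Σ_{i∈S} H_i , w(S) } and u(S) ≤ 2 · max{ ε·Σ_{i∈S} H_i , w(S) }. -/

import Mathlib

open MeasureTheory ProbabilityTheory

/-- For a subset `S` of coordinates, `mask S x` is the vector agreeing with `x` on `S`
and equal to `0` outside `S`. -/
def mask {n : ℕ} (S : Finset (Fin n)) (x : Fin n → ℝ) : Fin n → ℝ :=
  fun i => if i ∈ S then x i else 0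

lemma mask_empty {n : ℕ} (x : Fin n → ℝ) : mask ∅ x = 0 := by
  funext j; simp [mask]

lemma mask_nonneg {n : ℕ} (S : Finset (Fin n)) {x : Fin n → ℝ} (hx : 0 ≤ x) :
    0 ≤ mask S x := by
  intro i; unfold mask; dsimp only; split
  · exact hx i
  · exact le_rfl

lemma mask_le_mask {n : ℕ} (S : Finset (Fin n)) {x y : Fin n → ℝ} (hxy : x ≤ y) :
    mask S x ≤ mask S y := by
  intro i; unfold mask; dsimp only; split
  · exact hxy i
  · exact le_rfl

lemma single_le_mask {n : ℕ} {S : Finset (Fin n)} {x : Fin n → ℝ} (hx : 0 ≤ x)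
    {i : Fin n} (hi : i ∈ S) : Pi.single i (x i) ≤ mask S x := by
  intro j
  rcases eq_or_ne j i with h | h
  · subst h; simp [mask, hi]
  · simp only [Pi.single_apply, if_neg h]
    exact mask_nonneg S hx j

lemma mask_insert {n : ℕ} {a : Fin n} {S : Finset (Fin n)} (h : a ∉ S) (x : Fin n → ℝ) :
    mask (insert a S) x = Pi.single a (x a) + mask S x := by
  funext j
  rcases eq_or_ne j a with hj | hj
  · subst hj
    simp [mask, h]
  · simp [mask, hj, Pi.single_apply]

lemma single_nonneg' {n : ℕ} {i : Fin n} {r : ℝ} (hr : 0 ≤ r) :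
    (0 : Fin n → ℝ) ≤ Pi.single i r := by
  intro j
  rcases eq_or_ne j i with h | h
  · subst h; simpa using hr
  · simp [Pi.single_apply, h]

lemma measurable_single_fun {n : ℕ} (i : Fin n) :
    Measurable (fun r : ℝ => (Pi.single i r : Fin n → ℝ)) := by
  apply measurable_pi_lambda
  intro j
  simp only [Pi.single_apply]
  rcases eq_or_ne j i with h | h
  · simp [h]; exact measurable_id
  · simp [h]

theorem tail_summary_bounds
    {Ωs : Type*} [MeasurableSpace Ωs] (μ : Measure Ωs) [IsProbabilityMeasure μ]
    {n : ℕ} (hn : 1 ≤ n)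
    (X : Fin n → Ωs → ℝ)
    (hX_meas : ∀ i, Measurable (X i))
    (hX_nonneg : ∀ i ω, 0 ≤ X i ω)
    (hX_indep : iIndepFun X μ)
    (f : (Fin n → ℝ) → ℝ)
    (hf_meas : Measurable f)
    (hf_nonneg : ∀ x : Fin n → ℝ, 0 ≤ x → 0 ≤ f x)
    (hf_mono : ∀ x y : Fin n → ℝ, 0 ≤ x → x ≤ y → f x ≤ f y)
    (hf_subadd : ∀ x y : Fin n → ℝ, 0 ≤ x → 0 ≤ y → f (x + y) ≤ f x + f y)
    (k : ℕ) (hk : 1 ≤ k)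
    (ε Δ : ℝ) (hε : ε ∈ Set.Ioo (0 : ℝ) 1) (hΔ : Δ ∈ Set.Ico (0 : ℝ) ε)
    (τ : Fin n → ℝ) (hτ : ∀ i, 0 ≤ τ i)
    (hquant : ∀ i, 1 - ε ≤ (μ {ω | X i ω ≤ τ i}).toReal ∧
      (μ {ω | X i ω ≤ τ i}).toReal ≤ 1 - ε + Δ)
    (H : Fin n → ℝ)
    (hH : ∀ i, H i = (∫ ω in {ω | τ i < X i ω}, f (Pi.single i (X i ω)) ∂μ) /
      (μ {ω | τ i < X i ω}).toReal)
    (hH_int : ∀ i, Integrable (fun ω => f (Pi.single i (X i ω))) μ)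
    (u w : Finset (Fin n) → ℝ)
    (hu : ∀ S, u S = ∫ ω, f (mask S (fun i => X i ω)) ∂μ)
    (hw : ∀ S, w S =
      ∫ ω, f (mask S (fun i => if X i ω ≤ τ i then X i ω else 0)) ∂μ)
    (hu_int : ∀ S : Finset (Fin n),
      Integrable (fun ω => f (mask S (fun i => X i ω))) μ)
    (hw_int : ∀ S : Finset (Fin n),
      Integrable (fun ω => f (mask S (fun i => if X i ω ≤ τ i then X i ω else 0))) μ) :
    ∀ S : Finset (Fin n), S.card ≤ k →
      (1 - ε) ^ (k - 1) * (1 - Δ / ε) * max (ε * ∑ i ∈ S, H i) (w S) ≤ u S ∧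
      u S ≤ 2 * max (ε * ∑ i ∈ S, H i) (w S) := by
  classical
  obtain ⟨hε0, hε1⟩ := hε
  obtain ⟨hΔ0, hΔε⟩ := hΔ
  -- measurability of the events
  have hsm : ∀ i, MeasurableSet {ω | X i ω ≤ τ i} := fun i =>
    measurableSet_le (hX_meas i) measurable_const
  have hsm' : ∀ i, MeasurableSet {ω | τ i < X i ω} := fun i =>
    measurableSet_lt measurable_const (hX_meas i)
  have hcompl : ∀ i, {ω | τ i < X i ω} = {ω | X i ω ≤ τ i}ᶜ := by
    intro i; ext ω; simp [not_le]
  -- probabilities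
  set q : Fin n → ℝ := fun i => (μ {ω | X i ω ≤ τ i}).toReal with hqdef
  set p : Fin n → ℝ := fun i => (μ {ω | τ i < X i ω}).toReal with hpdef
  have hpq : ∀ i, p i = 1 - q i := by
    intro i
    have h1 : μ {ω | τ i < X i ω} = 1 - μ {ω | X i ω ≤ τ i} := by
      rw [hcompl i]
      exact prob_compl_eq_one_sub (hsm i)
    have h2 : μ {ω | X i ω ≤ τ i} ≤ 1 := prob_le_one
    simp only [hpdef, hqdef, h1]
    rw [ENNReal.toReal_sub_of_le h2 ENNReal.one_ne_top, ENNReal.toReal_one]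
  have hp_lb : ∀ i, ε - Δ ≤ p i := by
    intro i; rw [hpq i]; have := (hquant i).2; simp only [hqdef] at this ⊢; linarith
  have hp_ub : ∀ i, p i ≤ ε := by
    intro i; rw [hpq i]; have := (hquant i).1; simp only [hqdef] at this ⊢; linarith
  have hp_pos : ∀ i, 0 < p i := fun i => lt_of_lt_of_le (by linarith) (hp_lb i)
  have hq_lb : ∀ i, 1 - ε ≤ q i := fun i => (hquant i).1
  -- H values and tail integrals
  have hH_nonneg : ∀ i, 0 ≤ H i := by
    intro i
    rw [hH i]
    apply div_nonneg _ ENNReal.toReal_nonneg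
    apply setIntegral_nonneg (hsm' i)
    intro ω _
    exact hf_nonneg _ (single_nonneg' (hX_nonneg i ω))
  have hset_int : ∀ i, (∫ ω in {ω | τ i < X i ω}, f (Pi.single i (X i ω)) ∂μ) = H i * p i := by
    intro i
    rw [hH i]
    field_simp [ne_of_gt (hp_pos i)]
    exact (mul_div_cancel_right₀ _ (ne_of_gt (hp_pos i))).symm
  -- the "tail" functions Y i
  set Y : Fin n → Ωs → ℝ :=
    fun i ω => if τ i < X i ω then f (Pi.single i (X i ω)) else 0 with hYdef
  have hY_eq : ∀ i, Y i = Set.indicator {ω | τ i < X i ω} (fun ω => f (Pi.single i (X i ω))) := by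
    intro i; funext ω; simp [hYdef, Set.indicator_apply, Set.mem_setOf_eq]
  have hY_int : ∀ i, Integrable (Y i) μ := by
    intro i; rw [hY_eq i]; exact (hH_int i).indicator (hsm' i)
  have hY_nonneg : ∀ i ω, 0 ≤ Y i ω := by
    intro i ω; simp only [hYdef]; split
    · exact hf_nonneg _ (single_nonneg' (hX_nonneg i ω))
    · exact le_rfl
  have hY_integral : ∀ i, (∫ ω, Y i ω ∂μ) = H i * p i := by
    intro i
    rw [hY_eq i, integral_indicator (hsm' i), hset_int i]
  -- pointwise subadditivity decomposition (upper bound)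
  have key_up : ∀ S : Finset (Fin n), ∀ v : Fin n → ℝ, 0 ≤ v → ∀ ω : Ωs,
      f (v + mask S (fun i => X i ω)) ≤
        f (v + mask S (fun i => if X i ω ≤ τ i then X i ω else 0)) + ∑ i ∈ S, Y i ω := by
    intro S
    induction S using Finset.induction_on with
    | empty => intro v hv ω; simp [mask_empty]
    | @insert a S ha ih =>
      intro v hv ω
      rw [mask_insert ha, mask_insert ha, Finset.sum_insert ha]
      by_cases hc : X a ω ≤ τ a
      · have hZa : (if X a ω ≤ τ a then X a ω else 0) = X a ω := if_pos hc
        have hYa : Y a ω = 0 := by simp [hYdef, not_lt.mpr hc]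
        rw [hZa, hYa]
        have hv' : 0 ≤ v + Pi.single a (X a ω) :=
          add_nonneg hv (single_nonneg' (hX_nonneg a ω))
        have := ih (v + Pi.single a (X a ω)) hv' ω
        calc f (v + (Pi.single a (X a ω) + mask S fun i => X i ω))
            = f (v + Pi.single a (X a ω) + mask S fun i => X i ω) := by rw [add_assoc]
          _ ≤ f (v + Pi.single a (X a ω) +
                mask S fun i => if X i ω ≤ τ i then X i ω else 0) + ∑ i ∈ S, Y i ω := this
          _ = f (v + (Pi.single a (X a ω) +
                mask S fun i => if X i ω ≤ τ i then X i ω else 0)) + ∑ i ∈ S, Y i ω := by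
                rw [add_assoc]
          _ ≤ _ := by linarith
      · have hZa : (if X a ω ≤ τ a then X a ω else 0) = 0 := if_neg hc
        have hYa : Y a ω = f (Pi.single a (X a ω)) := by
          simp [hYdef, lt_of_not_ge hc]
        rw [hZa, hYa]
        have hmX : (0:Fin n → ℝ) ≤ mask S fun i => X i ω :=
          mask_nonneg S (fun i => hX_nonneg i _)
        have h1 : f (v + (Pi.single a (X a ω) + mask S fun i => X i ω)) ≤
            f (v + mask S fun i => X i ω) + f (Pi.single a (X a ω)) := by
          have : v + (Pi.single a (X a ω) + mask S fun i => X i ω) =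
              (v + mask S fun i => X i ω) + Pi.single a (X a ω) := by
            abel
          rw [this]
          exact hf_subadd _ _ (add_nonneg hv hmX) (single_nonneg' (hX_nonneg a ω))
        have h2 := ih v hv ω
        have h3 : (Pi.single a (0:ℝ) : Fin n → ℝ) = 0 := by
          funext j; simp [Pi.single_apply]
        rw [h3]
        simp only [zero_add]
        linarith
  -- pointwise inequality for u ≤ w + Σ tails, integrated
  have upper1 : ∀ S : Finset (Fin n), u S ≤ w S + ∑ i ∈ S, H i * p i := by
    intro S
    rw [hu S, hw S]
    have hle : ∀ ω, f (mask S fun i => X i ω) ≤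
        f (mask S fun i => if X i ω ≤ τ i then X i ω else 0) + ∑ i ∈ S, Y i ω := by
      intro ω
      have := key_up S 0 le_rfl ω
      simpa using this
    have hint : Integrable (fun ω =>
        f (mask S fun i => if X i ω ≤ τ i then X i ω else 0) + ∑ i ∈ S, Y i ω) μ :=
      (hw_int S).add (integrable_finset_sum S fun i _ => hY_int i)
    calc (∫ ω, f (mask S fun i => X i ω) ∂μ)
        ≤ ∫ ω, (f (mask S fun i => if X i ω ≤ τ i then X i ω else 0) + ∑ i ∈ S, Y i ω) ∂μ :=
          integral_mono (hu_int S) hint hle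
      _ = (∫ ω, f (mask S fun i => if X i ω ≤ τ i then X i ω else 0) ∂μ)
          + ∑ i ∈ S, H i * p i := by
          rw [integral_add (hw_int S) (integrable_finset_sum S fun i _ => hY_int i),
            integral_finset_sum S fun i _ => hY_int i]
          simp_rw [hY_integral]
  -- w nonneg, and w ≤ u
  have hw_nonneg : ∀ S, 0 ≤ w S := by
    intro S
    rw [hw S]
    apply integral_nonneg
    intro ω
    apply hf_nonneg
    apply mask_nonneg
    intro i
    dsimp only
    split
    · exact hX_nonneg i ω
    · exact le_rfl
  have hwu : ∀ S, w S ≤ u S := by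
    intro S
    rw [hw S, hu S]
    apply integral_mono (hw_int S) (hu_int S)
    intro ω
    apply hf_mono
    · apply mask_nonneg
      intro i; dsimp only; split
      · exact hX_nonneg i ω
      · exact le_rfl
    · apply mask_le_mask
      intro i; dsimp only; split
      · exact le_rfl
      · exact hX_nonneg i ω
  -- main per-set work
  intro S hS
  -- the lower bound via disjoint events
  set B : Fin n → Set Ωs := fun i => {ω | ∀ j ∈ S.erase i, X j ω ≤ τ j} with hBdef
  have hB_eq : ∀ i, B i = ⋂ j ∈ S.erase i, {ω | X j ω ≤ τ j} := by
    intro i; ext ω; simp [hBdef, Set.mem_iInter₂]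
  have hB_meas : ∀ i, MeasurableSet (B i) := by
    intro i; rw [hB_eq i]
    exact MeasurableSet.biInter (Finset.countable_toSet _) fun j _ => hsm j
  have hB_measure : ∀ i, (μ (B i)).toReal = ∏ j ∈ S.erase i, q j := by
    intro i
    rw [hB_eq i, hX_indep.meas_biInter (S := S.erase i) (s := fun j => {ω | X j ω ≤ τ j})
      (fun j _ => ⟨Set.Iic (τ j), measurableSet_Iic, rfl⟩),
      ENNReal.toReal_prod]
  have hB_lb : ∀ i ∈ S, (1 - ε) ^ (k - 1) ≤ (μ (B i)).toReal := by
    intro i hi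
    rw [hB_measure i]
    have h1 : (1 - ε) ^ (S.erase i).card ≤ ∏ j ∈ S.erase i, q j := by
      rw [← Finset.prod_const]
      apply Finset.prod_le_prod (fun j _ => by linarith) (fun j _ => hq_lb j)
    refine le_trans ?_ h1
    apply pow_le_pow_of_le_one (by linarith) (by linarith)
    have : (S.erase i).card = S.card - 1 := Finset.card_erase_of_mem hi
    omega
  -- g i = indicator of A i
  set g : Fin n → Ωs → ℝ := fun i ω =>
    if (τ i < X i ω ∧ ∀ j ∈ S.erase i, X j ω ≤ τ j) then f (Pi.single i (X i ω)) else 0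
    with hgdef
  have hg_eq_ind : ∀ i, g i = Set.indicator ({ω | τ i < X i ω} ∩ B i)
      (fun ω => f (Pi.single i (X i ω))) := by
    intro i; funext ω
    simp [hgdef, Set.indicator_apply, Set.mem_inter_iff, Set.mem_setOf_eq, hBdef]
  have hg_int : ∀ i, Integrable (g i) μ := by
    intro i; rw [hg_eq_ind i]
    exact (hH_int i).indicator ((hsm' i).inter (hB_meas i))
  have hg_mul : ∀ i, g i = fun ω => Y i ω * (B i).indicator (fun _ => (1:ℝ)) ω := by
    intro i; funext ω
    simp only [hgdef, hYdef, Set.indicator_apply, hBdef, Set.mem_setOf_eq]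
    by_cases h1 : τ i < X i ω <;> by_cases h2 : ∀ j ∈ S.erase i, X j ω ≤ τ j <;>
      simp [h1, h2]
  -- independence: Y i vs indicator of B i
  have hg_integral : ∀ i, (∫ ω, g i ω ∂μ) = (H i * p i) * (μ (B i)).toReal := by
    intro i
    have hindep : IndepFun (Y i) ((B i).indicator (fun _ => (1:ℝ))) μ := by
      have hd : Disjoint ({i} : Finset (Fin n)) (S.erase i) := by
        simp [Finset.disjoint_singleton_left]
      have hbase := hX_indep.indepFun_finset {i} (S.erase i) hd hX_meas
      set φ : (∀ _ : ({i} : Finset (Fin n)), ℝ) → ℝ := fun v =>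
        if τ i < v ⟨i, Finset.mem_singleton_self i⟩
          then f (Pi.single i (v ⟨i, Finset.mem_singleton_self i⟩)) else 0 with hφdef
      set ψ : (∀ _ : ((S.erase i) : Finset (Fin n)), ℝ) → ℝ := fun v =>
        if ∀ j : ((S.erase i) : Finset (Fin n)), v j ≤ τ j then 1 else 0 with hψdef
      have hφm : Measurable φ := by
        apply Measurable.ite
        · exact measurableSet_lt measurable_const (measurable_pi_apply _)
        · exact hf_meas.comp ((measurable_single_fun i).comp (measurable_pi_apply _))
        · exact measurable_const
      have hψm : Measurable ψ := by
        apply Measurable.ite _ measurable_const measurable_const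
        have : {v : (∀ _ : ((S.erase i) : Finset (Fin n)), ℝ) |
            ∀ j : ((S.erase i) : Finset (Fin n)), v j ≤ τ j} =
            ⋂ j : ((S.erase i) : Finset (Fin n)), {v | v j ≤ τ j} := by
          ext v; simp
        rw [this]
        exact MeasurableSet.iInter fun j =>
          measurableSet_le (measurable_pi_apply _) measurable_const
      have := hbase.comp hφm hψm
      have heq1 : (φ ∘ fun a (j : ({i} : Finset (Fin n))) => X j a) = Y i := by
        funext a; simp [hφdef, hYdef, Function.comp]
      have heq2 : (ψ ∘ fun a (j : ((S.erase i) : Finset (Fin n))) => X j a) =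
          (B i).indicator (fun _ => (1:ℝ)) := by
        funext a
        simp only [hψdef, Function.comp, Set.indicator_apply, hBdef, Set.mem_setOf_eq]
        congr 1
        simp [Subtype.forall]
      rwa [heq1, heq2] at this
    have hind_int : Integrable ((B i).indicator (fun _ => (1:ℝ))) μ :=
      (integrable_const (1:ℝ)).indicator (hB_meas i)
    have := hindep.integral_fun_mul_eq_mul_integral (hY_int i).aestronglyMeasurable
      hind_int.aestronglyMeasurable
    rw [hg_mul i]
    have hμB : (∫ ω, (B i).indicator (fun _ => (1:ℝ)) ω ∂μ) = (μ (B i)).toReal := by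
      rw [integral_indicator (hB_meas i)]
      simp [Measure.real]
    calc (∫ ω, Y i ω * (B i).indicator (fun _ => (1:ℝ)) ω ∂μ)
        = (∫ ω, Y i ω ∂μ) * ∫ ω, (B i).indicator (fun _ => (1:ℝ)) ω ∂μ := this
      _ = (H i * p i) * (μ (B i)).toReal := by rw [hY_integral i, hμB]
  -- pointwise: sum of g over S is ≤ f(mask S X)
  have hg_pt : ∀ ω, (∑ i ∈ S, g i ω) ≤ f (mask S fun i => X i ω) := by
    intro ω
    have hfX : 0 ≤ f (mask S fun i => X i ω) :=
      hf_nonneg _ (mask_nonneg S fun i => hX_nonneg i ω)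
    by_cases hex : ∃ i₀ ∈ S, τ i₀ < X i₀ ω ∧ ∀ j ∈ S.erase i₀, X j ω ≤ τ j
    · obtain ⟨i₀, hi₀S, hi₀⟩ := hex
      have hsum : (∑ i ∈ S, g i ω) = g i₀ ω := by
        apply Finset.sum_eq_single_of_mem i₀ hi₀S
        intro j hjS hji
        simp only [hgdef]
        rw [if_neg]
        rintro ⟨hj1, _⟩
        exact absurd (hi₀.2 j (Finset.mem_erase.mpr ⟨hji, hjS⟩)) (not_le.mpr hj1)
      rw [hsum]
      simp only [hgdef, if_pos hi₀]
      exact hf_mono _ _ (single_nonneg' (hX_nonneg i₀ ω))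
        (single_le_mask (fun i => hX_nonneg i ω) hi₀S)
    · have : ∀ i ∈ S, g i ω = 0 := by
        intro i hi
        simp only [hgdef]
        rw [if_neg]
        intro hcond
        exact hex ⟨i, hi, hcond⟩
      rw [Finset.sum_eq_zero this]
      exact hfX
  -- lower bound for u via sum of g
  have lower_sum : (∑ i ∈ S, (H i * p i) * (μ (B i)).toReal) ≤ u S := by
    rw [hu S]
    calc (∑ i ∈ S, (H i * p i) * (μ (B i)).toReal)
        = ∑ i ∈ S, ∫ ω, g i ω ∂μ := by
          exact Finset.sum_congr rfl fun i _ => (hg_integral i).symm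
      _ = ∫ ω, (∑ i ∈ S, g i ω) ∂μ := (integral_finset_sum S fun i _ => hg_int i).symm
      _ ≤ ∫ ω, f (mask S fun i => X i ω) ∂μ :=
          integral_mono (integrable_finset_sum S fun i _ => hg_int i) (hu_int S) hg_pt
  have lower_H : (1 - ε) ^ (k - 1) * (1 - Δ / ε) * (ε * ∑ i ∈ S, H i) ≤ u S := by
    have h1 : ∀ i ∈ S, (1 - ε) ^ (k - 1) * (ε - Δ) * H i ≤ (H i * p i) * (μ (B i)).toReal := by
      intro i hi
      have hμB_nn : (0:ℝ) ≤ (μ (B i)).toReal := ENNReal.toReal_nonneg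
      have h2 : (1 - ε) ^ (k - 1) * (ε - Δ) * H i ≤ (H i * (ε - Δ)) * (μ (B i)).toReal := by
        rw [show (1 - ε) ^ (k - 1) * (ε - Δ) * H i = (H i * (ε - Δ)) * (1-ε)^(k-1) by ring]
        apply mul_le_mul_of_nonneg_left (hB_lb i hi)
        exact mul_nonneg (hH_nonneg i) (by linarith)
      refine h2.trans ?_
      apply mul_le_mul_of_nonneg_right _ hμB_nn
      exact mul_le_mul_of_nonneg_left (hp_lb i) (hH_nonneg i)
    have h3 : (1 - ε) ^ (k - 1) * (ε - Δ) * (∑ i ∈ S, H i) ≤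
        ∑ i ∈ S, (H i * p i) * (μ (B i)).toReal := by
      rw [Finset.mul_sum]
      exact Finset.sum_le_sum h1
    have h4 : (1 - ε) ^ (k - 1) * (1 - Δ / ε) * (ε * ∑ i ∈ S, H i) =
        (1 - ε) ^ (k - 1) * (ε - Δ) * (∑ i ∈ S, H i) := by
      field_simp
    rw [h4]
    exact h3.trans lower_sum
  -- constant c ≤ 1 and ≥ 0
  have hc_nonneg : 0 ≤ (1 - ε) ^ (k - 1) * (1 - Δ / ε) := by
    apply mul_nonneg (pow_nonneg (by linarith) _)
    have : Δ / ε ≤ 1 := by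
      rw [div_le_one hε0]; linarith
    linarith
  have hc_le_one : (1 - ε) ^ (k - 1) * (1 - Δ / ε) ≤ 1 := by
    have h1 : (1 - ε) ^ (k - 1) ≤ 1 := pow_le_one₀ (by linarith) (by linarith)
    have h2 : 1 - Δ / ε ≤ 1 := by
      have : 0 ≤ Δ / ε := div_nonneg hΔ0 (le_of_lt hε0)
      linarith
    have h3 : 0 ≤ 1 - Δ / ε := by
      have : Δ / ε ≤ 1 := by rw [div_le_one hε0]; linarith
      linarith
    calc (1 - ε) ^ (k - 1) * (1 - Δ / ε) ≤ 1 * 1 :=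
      mul_le_mul h1 h2 h3 zero_le_one
    _ = 1 := by ring
  have lower_w : (1 - ε) ^ (k - 1) * (1 - Δ / ε) * w S ≤ u S := by
    calc (1 - ε) ^ (k - 1) * (1 - Δ / ε) * w S ≤ 1 * w S :=
      mul_le_mul_of_nonneg_right hc_le_one (hw_nonneg S)
    _ = w S := one_mul _
    _ ≤ u S := hwu S
  constructor
  · rw [mul_max_of_nonneg _ _ hc_nonneg]
    exact max_le lower_H lower_w
  · have h1 : (∑ i ∈ S, H i * p i) ≤ ε * ∑ i ∈ S, H i := by
      rw [Finset.mul_sum]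
      apply Finset.sum_le_sum
      intro i _
      rw [mul_comm ε (H i)]
      exact mul_le_mul_of_nonneg_left (hp_ub i) (hH_nonneg i)
    have h2 := upper1 S
    have h3 : ε * ∑ i ∈ S, H i ≤ max (ε * ∑ i ∈ S, H i) (w S) := le_max_left _ _
    have h4 : w S ≤ max (ε * ∑ i ∈ S, H i) (w S) := le_max_right _ _
    linarith
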